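/- Define Ĝ : ℕ → ℕ by Ĝ₀ = 1 and Ĝₙ = Ĝ_{n-1} + Σ_{i+j=n-2} ĜᵢĜⱼ + Σ_{i+j+k=n-3} ĜᵢĜⱼĜₖ for n ≥ 1 (empty sums are 0). Then for the real root z of 2z^3 + z^2 - 1 = 0 and C = 1 + 2z + 3z^2, there exists a constant M such that Ĝₙ ≤ M · Cⁿ for all n. -/

import Mathlib

open Finset

/-- The single recurrence Ĝₙ = Ĝ_{n-1} + Σ_{i+j=n-2} ĜᵢĜⱼ + Σ_{i+j+k=n-3} ĜᵢĜⱼĜₖ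
(empty sums are 0), with Ĝ₀ = 1. -/
def GhatRec (G : ℕ → ℕ) : Prop :=
  G 0 = 1 ∧
  ∀ n, 1 ≤ n →
    G n = G (n - 1)
      + (if 2 ≤ n then ∑ p ∈ Finset.HasAntidiagonal.antidiagonal (n - 2), G p.1 * G p.2 else 0)
      + (if 3 ≤ n then
          ∑ p ∈ Finset.HasAntidiagonal.antidiagonal (n - 3),
            G p.1 * ∑ q ∈ Finset.HasAntidiagonal.antidiagonal p.2, G q.1 * G q.2
        else 0)


/-- Partial sums of a convolution are bounded by the product of partial sums. -/
lemma conv2 (a b : ℕ → ℝ) (ha : ∀ i, 0 ≤ a i) (hb : ∀ i, 0 ≤ b i) (N : ℕ) :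
    ∑ m ∈ range N, ∑ p ∈ antidiagonal m, a p.1 * b p.2
      ≤ (∑ k ∈ range N, a k) * (∑ k ∈ range N, b k) := by
  have h1 : (∑ k ∈ range N, a k) * (∑ k ∈ range N, b k)
      = ∑ p ∈ range N ×ˢ range N, a p.1 * b p.2 := by
    rw [Finset.sum_mul_sum, Finset.sum_product]
  rw [h1]
  have h2 : ∑ m ∈ range N, ∑ p ∈ antidiagonal m, a p.1 * b p.2
      = ∑ p ∈ (range N).biUnion (fun m => antidiagonal m), a p.1 * b p.2 := by
    rw [Finset.sum_biUnion]
    intro x _ y _ hxy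
    simp only [Function.onFun]
    rw [Finset.disjoint_left]
    intro p hp hq
    rw [Finset.HasAntidiagonal.mem_antidiagonal] at hp hq
    omega
  rw [h2]
  apply Finset.sum_le_sum_of_subset_of_nonneg
  · intro p hp
    simp only [Finset.mem_biUnion, Finset.mem_range, Finset.HasAntidiagonal.mem_antidiagonal] at hp
    simp only [Finset.mem_product, Finset.mem_range]
    omega
  · intro p _ _
    exact mul_nonneg (ha _) (hb _)

lemma shift_sum (h : ℕ → ℝ) (c N : ℕ) :
    ∑ m ∈ range N, (if c ≤ m then h (m - c) else 0) = ∑ t ∈ range (N - c), h t := by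
  induction N with
  | zero => simp
  | succ N ih =>
    rw [Finset.sum_range_succ, ih]
    by_cases hc : c ≤ N
    · rw [if_pos hc]
      have hN : N + 1 - c = (N - c) + 1 := by omega
      rw [hN, Finset.sum_range_succ]
    · rw [if_neg hc]
      have h1 : N + 1 - c = 0 := by omega
      have h2 : N - c = 0 := by omega
      rw [h1, h2, add_zero]


theorem geometric_upper_bound (G : ℕ → ℕ) (hG : GhatRec G)
    (z : ℝ) (hz : 2 * z ^ 3 + z ^ 2 - 1 = 0) :
    ∃ M : ℝ, ∀ n, (G n : ℝ) ≤ M * (1 + 2 * z + 3 * z ^ 2) ^ n := by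
  obtain ⟨hG0, hGrec⟩ := hG
  -- z is positive
  have hzpos : 0 < z := by
    by_contra h
    push_neg at h
    nlinarith [sq_nonneg z, sq_nonneg (z + 1), mul_nonneg (mul_nonneg (neg_nonneg.2 h) (neg_nonneg.2 h)) (neg_nonneg.2 h)]
  set C : ℝ := 1 + 2 * z + 3 * z ^ 2 with hCdef
  have hC1 : 1 < C := by nlinarith
  have hCpos : 0 < C := by linarith
  set w : ℝ := C⁻¹ with hwdef
  have hwpos : 0 < w := inv_pos.2 hCpos
  have hwC : w * C = 1 := inv_mul_cancel₀ (ne_of_gt hCpos)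
  set s : ℝ := z * C with hsdef
  have hspos : 0 < s := mul_pos hzpos hCpos
  have hws : w * s = z := by
    rw [hsdef, mul_comm z C, ← mul_assoc, hwC, one_mul]
  have hfix : 1 + w * s + w ^ 2 * s ^ 2 + w ^ 3 * s ^ 3 = s := by
    have h2 : w ^ 2 * s ^ 2 = z ^ 2 := by rw [← mul_pow, hws]
    have h3 : w ^ 3 * s ^ 3 = z ^ 3 := by rw [← mul_pow, hws]
    rw [hws, h2, h3, hsdef, hCdef]
    nlinarith
  have hs1 : 1 ≤ s := by
    rw [hsdef, hCdef]; nlinarith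
  set a : ℕ → ℝ := fun k => (G k : ℝ) * w ^ k with hadef
  have hanonneg : ∀ k, 0 ≤ a k := fun k =>
    mul_nonneg (Nat.cast_nonneg _) (le_of_lt (pow_pos hwpos k))
  set S : ℕ → ℝ := fun n => ∑ k ∈ range (n + 1), a k with hSdef
  have hSnonneg : ∀ n, 0 ≤ S n := fun n => Finset.sum_nonneg (fun k _ => hanonneg k)
  -- the key recurrence at the level of a
  have hakey : ∀ m : ℕ, a (m + 1) = w * a m
      + (if 1 ≤ m then w ^ 2 * ∑ p ∈ antidiagonal (m - 1), a p.1 * a p.2 else 0)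
      + (if 2 ≤ m then w ^ 3 * ∑ p ∈ antidiagonal (m - 2),
            a p.1 * ∑ q ∈ antidiagonal p.2, a q.1 * a q.2 else 0) := by
    intro m
    have hrec := hGrec (m + 1) (by omega)
    have e1 : m + 1 - 1 = m := by omega
    have e2 : m + 1 - 2 = m - 1 := by omega
    have e3 : m + 1 - 3 = m - 2 := by omega
    rw [e1, e2, e3] at hrec
    have : a (m + 1) = ((G m : ℝ)
        + (if 2 ≤ m + 1 then ((∑ p ∈ antidiagonal (m - 1), G p.1 * G p.2 : ℕ) : ℝ) else 0)
        + (if 3 ≤ m + 1 then ((∑ p ∈ antidiagonal (m - 2),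
              G p.1 * ∑ q ∈ antidiagonal p.2, G q.1 * G q.2 : ℕ) : ℝ) else 0)) * w ^ (m + 1) := by
      rw [hadef]
      simp only [hrec]
      push_cast
      split_ifs <;> ring
    rw [this]
    rw [add_mul, add_mul]
    congr 1
    · congr 1
      · rw [pow_succ, ← mul_assoc, mul_comm ((G m : ℝ)) (w ^ m)]
        rw [hadef]; ring
      · by_cases h1 : 1 ≤ m
        · rw [if_pos (by omega : 2 ≤ m + 1), if_pos h1]
          push_cast
          rw [Finset.sum_mul, Finset.mul_sum]
          apply Finset.sum_congr rfl
          intro p hp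
          rw [Finset.HasAntidiagonal.mem_antidiagonal] at hp
          have hm : m + 1 = p.1 + p.2 + 2 := by omega
          rw [hadef, hm, pow_add, pow_add]
          ring
        · rw [if_neg (by omega : ¬ 2 ≤ m + 1), if_neg h1, zero_mul]
    · by_cases h2 : 2 ≤ m
      · rw [if_pos (by omega : 3 ≤ m + 1), if_pos h2]
        push_cast
        rw [Finset.sum_mul, Finset.mul_sum]
        apply Finset.sum_congr rfl
        intro p hp
        rw [Finset.HasAntidiagonal.mem_antidiagonal] at hp
        have hm : m + 1 = p.1 + p.2 + 3 := by omega
        rw [hadef, hm]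
        simp only
        rw [Finset.mul_sum, Finset.mul_sum, Finset.sum_mul]
        rw [Finset.mul_sum]
        apply Finset.sum_congr rfl
        intro q hq
        rw [Finset.HasAntidiagonal.mem_antidiagonal] at hq
        have hq2 : p.2 = q.1 + q.2 := hq.symm
        rw [hq2, pow_add, pow_add, pow_add]
        ring
      · rw [if_neg (by omega : ¬ 3 ≤ m + 1), if_neg h2, zero_mul]
  -- partial sums satisfy the fixed point inequality
  have hstep : ∀ n : ℕ, S (n + 1) ≤ 1 + w * S n + w ^ 2 * (S n) ^ 2 + w ^ 3 * (S n) ^ 3 := by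
    intro n
    have hs0 : S (n + 1) = a 0 + ∑ m ∈ range (n + 1), a (m + 1) := by
      rw [hSdef]
      simp only
      rw [Finset.sum_range_succ']
      ring
    have ha0 : a 0 = 1 := by rw [hadef]; simp [hG0]
    rw [hs0, ha0]
    have hsum : ∑ m ∈ range (n + 1), a (m + 1)
        = w * S n
        + ∑ t ∈ range n, w ^ 2 * ∑ p ∈ antidiagonal t, a p.1 * a p.2
        + ∑ t ∈ range (n - 1), w ^ 3 * ∑ p ∈ antidiagonal t,
              a p.1 * ∑ q ∈ antidiagonal p.2, a q.1 * a q.2 := by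
      calc ∑ m ∈ range (n + 1), a (m + 1)
          = ∑ m ∈ range (n + 1), (w * a m
            + (if 1 ≤ m then w ^ 2 * ∑ p ∈ antidiagonal (m - 1), a p.1 * a p.2 else 0)
            + (if 2 ≤ m then w ^ 3 * ∑ p ∈ antidiagonal (m - 2),
                  a p.1 * ∑ q ∈ antidiagonal p.2, a q.1 * a q.2 else 0)) :=
            Finset.sum_congr rfl (fun m _ => hakey m)
        _ = _ := by
            rw [Finset.sum_add_distrib, Finset.sum_add_distrib]
            congr 1
            · congr 1
              · rw [← Finset.mul_sum]
              · exact shift_sum (fun t => w ^ 2 * ∑ p ∈ antidiagonal t, a p.1 * a p.2) 1 (n + 1)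
            · have := shift_sum (fun t => w ^ 3 * ∑ p ∈ antidiagonal t,
                  a p.1 * ∑ q ∈ antidiagonal p.2, a q.1 * a q.2) 2 (n + 1)
              have e : n + 1 - 2 = n - 1 := by omega
              rw [this, e]
    rw [hsum]
    have hmono : ∀ N, N ≤ n + 1 → ∑ k ∈ range N, a k ≤ S n := by
      intro N hN
      apply Finset.sum_le_sum_of_subset_of_nonneg
      · exact Finset.range_subset_range.2 hN
      · intro k _ _; exact hanonneg k
    have hbnonneg : ∀ j, 0 ≤ ∑ q ∈ antidiagonal j, a q.1 * a q.2 := fun j =>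
      Finset.sum_nonneg (fun q _ => mul_nonneg (hanonneg _) (hanonneg _))
    have hP2 : ∑ t ∈ range n, w ^ 2 * ∑ p ∈ antidiagonal t, a p.1 * a p.2
        ≤ w ^ 2 * (S n) ^ 2 := by
      rw [← Finset.mul_sum]
      apply mul_le_mul_of_nonneg_left _ (le_of_lt (pow_pos hwpos 2))
      calc ∑ t ∈ range n, ∑ p ∈ antidiagonal t, a p.1 * a p.2
          ≤ (∑ k ∈ range n, a k) * (∑ k ∈ range n, a k) := conv2 a a hanonneg hanonneg n
        _ ≤ S n * S n := by
            apply mul_le_mul (hmono n (by omega)) (hmono n (by omega))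
              (Finset.sum_nonneg (fun k _ => hanonneg k)) (hSnonneg n)
        _ = (S n) ^ 2 := (sq (S n)).symm
    have hP3 : ∑ t ∈ range (n - 1), w ^ 3 * ∑ p ∈ antidiagonal t,
          a p.1 * ∑ q ∈ antidiagonal p.2, a q.1 * a q.2
        ≤ w ^ 3 * (S n) ^ 3 := by
      rw [← Finset.mul_sum]
      apply mul_le_mul_of_nonneg_left _ (le_of_lt (pow_pos hwpos 3))
      have step1 : ∑ t ∈ range (n - 1), ∑ p ∈ antidiagonal t,
            a p.1 * ∑ q ∈ antidiagonal p.2, a q.1 * a q.2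
          ≤ (∑ k ∈ range (n - 1), a k)
            * (∑ j ∈ range (n - 1), ∑ q ∈ antidiagonal j, a q.1 * a q.2) :=
        conv2 a (fun j => ∑ q ∈ antidiagonal j, a q.1 * a q.2) hanonneg hbnonneg (n - 1)
      have step2 : ∑ j ∈ range (n - 1), ∑ q ∈ antidiagonal j, a q.1 * a q.2
          ≤ (∑ k ∈ range (n - 1), a k) * (∑ k ∈ range (n - 1), a k) :=
        conv2 a a hanonneg hanonneg (n - 1)
      have hra : ∑ k ∈ range (n - 1), a k ≤ S n := hmono (n - 1) (by omega)
      have hra0 : 0 ≤ ∑ k ∈ range (n - 1), a k := Finset.sum_nonneg (fun k _ => hanonneg k)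
      calc ∑ t ∈ range (n - 1), ∑ p ∈ antidiagonal t,
            a p.1 * ∑ q ∈ antidiagonal p.2, a q.1 * a q.2
          ≤ (∑ k ∈ range (n - 1), a k)
            * ((∑ k ∈ range (n - 1), a k) * (∑ k ∈ range (n - 1), a k)) :=
            le_trans step1 (mul_le_mul_of_nonneg_left step2 hra0)
        _ ≤ S n * (S n * S n) := by
            apply mul_le_mul hra _ (mul_nonneg hra0 hra0) (hSnonneg n)
            exact mul_le_mul hra hra hra0 (hSnonneg n)
        _ = (S n) ^ 3 := by ring
    linarith [hP2, hP3]
  -- by induction, S n ≤ s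
  have hS : ∀ n, S n ≤ s := by
    intro n
    induction n with
    | zero =>
      rw [hSdef]
      simp [hadef, hG0]
      exact hs1
    | succ n ih =>
      calc S (n + 1) ≤ 1 + w * S n + w ^ 2 * (S n) ^ 2 + w ^ 3 * (S n) ^ 3 := hstep n
        _ ≤ 1 + w * s + w ^ 2 * s ^ 2 + w ^ 3 * s ^ 3 := by
            have h1 : w * S n ≤ w * s := mul_le_mul_of_nonneg_left ih (le_of_lt hwpos)
            have h2 : (S n) ^ 2 ≤ s ^ 2 := pow_le_pow_left₀ (hSnonneg n) ih 2
            have h3 : (S n) ^ 3 ≤ s ^ 3 := pow_le_pow_left₀ (hSnonneg n) ih 3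
            have h2' : w ^ 2 * (S n) ^ 2 ≤ w ^ 2 * s ^ 2 :=
              mul_le_mul_of_nonneg_left h2 (le_of_lt (pow_pos hwpos 2))
            have h3' : w ^ 3 * (S n) ^ 3 ≤ w ^ 3 * s ^ 3 :=
              mul_le_mul_of_nonneg_left h3 (le_of_lt (pow_pos hwpos 3))
            linarith
        _ = s := hfix
  -- conclude
  refine ⟨s, fun n => ?_⟩
  have han : a n ≤ S n := by
    rw [hSdef]
    apply Finset.single_le_sum (fun k _ => hanonneg k)
    simp
  have h1 : (G n : ℝ) * w ^ n ≤ s := le_trans han (hS n)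
  have hwn : w ^ n = (C ^ n)⁻¹ := by rw [hwdef, inv_pow]
  rw [hwn] at h1
  calc (G n : ℝ) = (G n : ℝ) * (C ^ n)⁻¹ * C ^ n := by
        field_simp
    _ ≤ s * C ^ n := mul_le_mul_of_nonneg_right h1 (le_of_lt (pow_pos hCpos n))
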